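/- Let I be an ideal on ℕ that can be written as a countable union of weakly bounded subsets (with respect to inclusion). Then for every monotone map f : I → K(ℕ^ℕ) into the compact subsets of Baire space, ⋃_{A ∈ I} f(A) ≠ ℕ^ℕ. -/

import Mathlib

open scoped ENNReal Cardinal

/-- An ideal on ℕ containing all finite sets, closed under subsets and finite
unions, with `ℕ ∉ I`. -/
def IsIdealOn (I : Set (Set ℕ)) : Prop :=
  Set.univ ∉ I ∧ (∀ A ∈ I, ∀ B, B ⊆ A → B ∈ I) ∧
    (∀ A ∈ I, ∀ B ∈ I, A ∪ B ∈ I) ∧ (∀ A : Set ℕ, A.Finite → A ∈ I)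

/-- `β` is a basis of the ideal `I`: a cofinal (under inclusion) subfamily. -/
def IsIdealBasis (I β : Set (Set ℕ)) : Prop := β ⊆ I ∧ ∀ A ∈ I, ∃ B ∈ β, A ⊆ B

/-- `I` is a Baire ideal for the topological space `X`: for every monotone family of
nowhere dense subsets of `X` indexed by `I`, the union is not all of `X`. -/
def IsBaireIdealFor (I : Set (Set ℕ)) (X : Type*) [TopologicalSpace X] : Prop :=
  ∀ f : Set ℕ → Set X, (∀ A ∈ I, IsNowhereDense (f A)) →
    (∀ A ∈ I, ∀ B ∈ I, A ⊆ B → f A ⊆ f B) → (⋃ A ∈ I, f A) ≠ Set.univ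

/-- `B` is a weakly bounded subset of the ideal `I` (ordered by inclusion): every
infinite subset of `B` contains an infinite subset with an upper bound in `I`. -/
def WeaklyBounded (I B : Set (Set ℕ)) : Prop :=
  ∀ C : Set (Set ℕ), C ⊆ B → C.Infinite →
    ∃ C' : Set (Set ℕ), C' ⊆ C ∧ C'.Infinite ∧ ∃ U ∈ I, ∀ A ∈ C', A ⊆ U

section Aux
open Filter Topology

/-- Compact subsets of Baire space are nowhere dense. -/
lemma compact_isNowhereDense {K : Set (ℕ → ℕ)} (hK : IsCompact K) : IsNowhereDense K := by
  rw [hK.isClosed.isNowhereDense_iff]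
  by_contra h
  obtain ⟨x, hx⟩ := Set.nonempty_iff_ne_empty.2 h
  have hmem : K ∈ 𝓝 x := mem_of_superset (isOpen_interior.mem_nhds hx) interior_subset
  rw [nhds_pi, Filter.mem_pi] at hmem
  obtain ⟨F, hF, s, hs, hsK⟩ := hmem
  obtain ⟨j, hj⟩ := hF.infinite_compl.nonempty
  have hall : ∀ n : ℕ, Function.update x j n ∈ K := by
    intro n
    apply hsK
    intro i hi
    have hij : i ≠ j := fun hij => hj (hij ▸ hi)
    rw [Function.update_of_ne hij]
    exact mem_of_mem_nhds (hs i)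
  have himg : IsCompact ((fun g : ℕ → ℕ => g j) '' K) := hK.image (continuous_apply j)
  have : Set.univ ⊆ (fun g : ℕ → ℕ => g j) '' K := by
    intro n _
    exact ⟨Function.update x j n, hall n, by simp⟩
  rw [Set.univ_subset_iff] at this
  exact noncompact_univ ℕ (this ▸ himg)

lemma closure_union_compact (I B : Set (Set ℕ)) (hB : B ⊆ I) (hwb : WeaklyBounded I B)
    (f : Set ℕ → Set (ℕ → ℕ)) (hcomp : ∀ A ∈ I, IsCompact (f A))
    (hmono : ∀ A ∈ I, ∀ B ∈ I, A ⊆ B → f A ⊆ f B) :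
    IsCompact (closure (⋃ A ∈ B, f A)) := by
  letI : MetricSpace (ℕ → ℕ) := PiNat.metricSpaceNatNat
  set S := ⋃ A ∈ B, f A with hS
  have key : ∀ y : ℕ → (ℕ → ℕ), (∀ k, y k ∈ S) →
      ∃ p, ∃ φ : ℕ → ℕ, StrictMono φ ∧ Tendsto (y ∘ φ) atTop (𝓝 p) := by
    intro y hy
    have h1 : ∀ k, ∃ A ∈ B, y k ∈ f A := fun k => by
      simpa [hS, Set.mem_iUnion] using hy k
    choose A hA hyA using h1
    have main : ∃ K : Set ℕ, K.Infinite ∧ ∃ U ∈ I, ∀ k ∈ K, y k ∈ f U := by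
      by_cases hfin : (Set.range A).Finite
      · have hnall : ¬ ∀ a ∈ Set.range A, (A ⁻¹' {a}).Finite := by
          intro hall
          have hsub : (Set.univ : Set ℕ) ⊆ ⋃ a ∈ Set.range A, A ⁻¹' {a} := by
            intro k _
            exact Set.mem_biUnion ⟨k, rfl⟩ rfl
          exact Set.infinite_univ ((hfin.biUnion hall).subset hsub)
        push_neg at hnall
        obtain ⟨a, ha, hfib⟩ := hnall
        obtain ⟨k0, rfl⟩ := ha
        refine ⟨A ⁻¹' {A k0}, hfib, A k0, hB (hA k0), ?_⟩
        intro k hk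
        have : A k = A k0 := hk
        rw [← this]
        exact hyA k
      · obtain ⟨C', hC'sub, hC'inf, U, hU, hbound⟩ :=
          hwb (Set.range A) (Set.range_subset_iff.2 hA) hfin
        refine ⟨A ⁻¹' C', ?_, U, hU, ?_⟩
        · intro hpre
          apply hC'inf
          have : C' ⊆ A '' (A ⁻¹' C') := by
            intro a ha
            obtain ⟨k, rfl⟩ := hC'sub ha
            exact ⟨k, ha, rfl⟩
          exact (hpre.image A).subset this
        · intro k hk
          exact hmono (A k) (hB (hA k)) U hU (hbound (A k) hk) (hyA k)
    obtain ⟨K, hKinf, U, hU, hyU⟩ := main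
    haveI := hKinf.to_subtype
    let eo := Nat.Subtype.orderIsoOfNat K
    let e : ℕ → ℕ := fun n => (eo n : ℕ)
    have he : StrictMono e := fun m n hmn => by
      exact_mod_cast (eo.strictMono hmn)
    obtain ⟨p, _, φ, hφ, htend⟩ :=
      (hcomp U hU).isSeqCompact (x := y ∘ e) (fun n => hyU _ (eo n).2)
    exact ⟨p, e ∘ φ, he.comp hφ, htend⟩
  rw [isCompact_iff_isSeqCompact]
  intro x hx
  by_cases hSne : S.Nonempty
  · have happrox : ∀ k : ℕ, ∃ z ∈ S, dist (x k) z < 1 / (k + 1) := by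
      intro k
      exact Metric.mem_closure_iff.1 (hx k) _ (by positivity)
    choose z hz hdz using happrox
    obtain ⟨p, φ, hφ, htend⟩ := key z hz
    have hxtend : Tendsto (x ∘ φ) atTop (𝓝 p) := by
      have hd : Tendsto (fun n => dist (x (φ n)) (z (φ n))) atTop (𝓝 0) := by
        have h0 : Tendsto (fun n : ℕ => 1 / ((φ n : ℝ) + 1)) atTop (𝓝 0) :=
          (tendsto_one_div_add_atTop_nhds_zero_nat).comp (hφ.tendsto_atTop)
        exact squeeze_zero (fun n => dist_nonneg) (fun n => (hdz (φ n)).le) h0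
      exact htend.congr_dist (by simpa [dist_comm] using hd)
    refine ⟨p, ?_, φ, hφ, hxtend⟩
    exact mem_closure_of_tendsto htend (Filter.Eventually.of_forall fun n => hz (φ n))
  · have : S = ∅ := Set.not_nonempty_iff_eq_empty.1 hSne
    rw [this, closure_empty] at hx
    exact absurd (hx 0) (Set.notMem_empty _)

end Aux

/-- If `I` is a countable union of weakly bounded subsets, then no monotone map from `I`
into the compact subsets of Baire space `ℕ^ℕ` has union all of `ℕ^ℕ`. -/
theorem stmt_18 (I : Set (Set ℕ)) (hI : IsIdealOn I)
    (𝒞 : ℕ → Set (Set ℕ)) (h𝒞 : ∀ n, 𝒞 n ⊆ I) (hwb : ∀ n, WeaklyBounded I (𝒞 n))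
    (hcov : I = ⋃ n, 𝒞 n)
    (f : Set ℕ → Set (ℕ → ℕ)) (hcomp : ∀ A ∈ I, IsCompact (f A))
    (hmono : ∀ A ∈ I, ∀ B ∈ I, A ⊆ B → f A ⊆ f B) :
    (⋃ A ∈ I, f A) ≠ Set.univ := by
  intro heq
  set T : ℕ → Set (ℕ → ℕ) := fun n => closure (⋃ A ∈ 𝒞 n, f A) with hT
  have hTc : ∀ n, IsCompact (T n) := fun n =>
    closure_union_compact I (𝒞 n) (h𝒞 n) (hwb n) f hcomp hmono
  have hmeagre : IsMeagre (Set.univ : Set (ℕ → ℕ)) := by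
    rw [isMeagre_iff_countable_union_isNowhereDense]
    refine ⟨Set.range T, ?_, Set.countable_range T, ?_⟩
    · rintro t ⟨n, rfl⟩
      exact compact_isNowhereDense (hTc n)
    · rw [← heq]
      intro x hx
      obtain ⟨A, hAI, hxA⟩ : ∃ A ∈ I, x ∈ f A := by simpa [Set.mem_iUnion] using hx
      rw [hcov] at hAI
      obtain ⟨n, hn⟩ := Set.mem_iUnion.1 hAI
      exact Set.mem_sUnion.2 ⟨T n, ⟨n, rfl⟩, subset_closure (Set.mem_biUnion hn hxA)⟩
  have hdense : Dense ((Set.univ : Set (ℕ → ℕ))ᶜ) := dense_of_mem_residual hmeagre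
  rw [Set.compl_univ] at hdense
  exact absurd (hdense.nonempty) (by simp)
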